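/- The 5-dimensional nilpotent commutative associative algebra A₀₁ degenerates to A₀₂: the structure λ of A₀₂ lies in the closure of the GL(5,ℂ)-orbit O(μ) of the structure μ of A₀₁ (closure in the standard topology on the space of bilinear maps ℂ⁵ × ℂ⁵ → ℂ⁵). -/

import Mathlib

open ContinuousLinearMap

/-- The underlying space `ℂⁿ`. -/
abbrev Vn (n : ℕ) := Fin n → ℂ

/-- The space of bilinear maps `ℂⁿ × ℂⁿ → ℂⁿ` (as continuous linear maps in two
arguments), carrying its standard topology as a finite-dimensional complex vector space. -/
abbrev Bil (n : ℕ) := Vn n →L[ℂ] Vn n →L[ℂ] Vn n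

/-- The action of `GL(n, ℂ)` on bilinear maps: `(g · μ)(x, y) = g (μ (g⁻¹ x) (g⁻¹ y))`. -/
noncomputable def act {n : ℕ} (g : Vn n ≃L[ℂ] Vn n) (μ : Bil n) : Bil n :=
  ((compL ℂ (Vn n) (Vn n) (Vn n)).flip (g.symm : Vn n →L[ℂ] Vn n)).comp
    (((compL ℂ (Vn n) (Vn n) (Vn n)) (g : Vn n →L[ℂ] Vn n)).comp
      (μ.comp (g.symm : Vn n →L[ℂ] Vn n)))

@[simp] lemma act_apply {n : ℕ} (g : Vn n ≃L[ℂ] Vn n) (μ : Bil n) (x y : Vn n) :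
    act g μ x y = g (μ (g.symm x) (g.symm y)) := rfl

/-- The orbit `O(μ)` of a bilinear map under the `GL(n, ℂ)`-action. -/
noncomputable def orbit {n : ℕ} (μ : Bil n) : Set (Bil n) :=
  {ν | ∃ g : Vn n ≃L[ℂ] Vn n, ν = act g μ}

/-- The standard basis `e₁, …, e₅` of `ℂ⁵` (zero-indexed: `e i` is `e_{i+1}`). -/
def e (i : Fin 5) : Vn 5 := Pi.single i 1

/-- Multiplication table of the algebra `𝐀01` (entry `(i, j)` is `eᵢ · eⱼ`). -/
def tblA01 : Fin 5 → Fin 5 → Vn 5 :=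
  ![![e 1, e 2, e 3, e 4, 0],
   ![e 2, e 3, e 4, 0, 0],
   ![e 3, e 4, 0, 0, 0],
   ![e 4, 0, 0, 0, 0],
   ![0, 0, 0, 0, 0]]

/-- Multiplication table of the algebra `𝐀02` (entry `(i, j)` is `eᵢ · eⱼ`). -/
def tblA02 : Fin 5 → Fin 5 → Vn 5 :=
  ![![e 2, 0, e 3, e 4, 0],
   ![0, e 4, 0, 0, 0],
   ![e 3, 0, e 4, 0, 0],
   ![e 4, 0, 0, 0, 0],
   ![0, 0, 0, 0, 0]]

/-! ### Auxiliary machinery -/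

lemma fin5_mk0 (h : (0:ℕ) < 5) : (⟨0, h⟩ : Fin 5) = 0 := rfl
lemma fin5_mk1 (h : (1:ℕ) < 5) : (⟨1, h⟩ : Fin 5) = 1 := rfl
lemma fin5_mk2 (h : (2:ℕ) < 5) : (⟨2, h⟩ : Fin 5) = 2 := rfl
lemma fin5_mk3 (h : (3:ℕ) < 5) : (⟨3, h⟩ : Fin 5) = 3 := rfl
lemma fin5_mk4 (h : (4:ℕ) < 5) : (⟨4, h⟩ : Fin 5) = 4 := rfl

lemma e_mk0 (h : (0:ℕ) < 5) : e ⟨0, h⟩ = e 0 := rfl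
lemma e_mk1 (h : (1:ℕ) < 5) : e ⟨1, h⟩ = e 1 := rfl
lemma e_mk2 (h : (2:ℕ) < 5) : e ⟨2, h⟩ = e 2 := rfl
lemma e_mk3 (h : (3:ℕ) < 5) : e ⟨3, h⟩ = e 3 := rfl
lemma e_mk4 (h : (4:ℕ) < 5) : e ⟨4, h⟩ = e 4 := rfl

/-- Build a linear map from the images of the basis vectors. -/
noncomputable def phi (M : Fin 5 → Vn 5) : Vn 5 →L[ℂ] Vn 5 :=
  ∑ i, (ContinuousLinearMap.proj i).smulRight (M i)

lemma phi_apply (M : Fin 5 → Vn 5) (x : Vn 5) : phi M x = ∑ i, x i • M i := by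
  simp [phi]

lemma phi_e (M : Fin 5 → Vn 5) (a : Fin 5) : phi M (e a) = M a := by
  rw [phi_apply]; simp [e, Pi.single_apply, ite_smul]

/-- Build a bilinear map from the products of the basis vectors. -/
noncomputable def psi (T : Fin 5 → Fin 5 → Vn 5) : Bil 5 :=
  ∑ i, (ContinuousLinearMap.proj i).smulRight (phi (T i))

lemma psi_e (T : Fin 5 → Fin 5 → Vn 5) (a b : Fin 5) : psi T (e a) (e b) = T a b := by
  have h : psi T (e a) = phi (T a) := by
    simp [psi, ContinuousLinearMap.sum_apply, e, Pi.single_apply, ite_smul]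
  rw [h, phi_e]

lemma expand (x : Vn 5) : x = ∑ i, x i • e i := by
  funext j; simp [e, Pi.single_apply, Finset.sum_apply, Finset.sum_ite_eq]

lemma clm_ext {W : Type*} [NormedAddCommGroup W] [NormedSpace ℂ W]
    {A B : Vn 5 →L[ℂ] W} (h : ∀ i, A (e i) = B (e i)) : A = B := by
  ext x
  conv_lhs => rw [expand x]
  conv_rhs => rw [expand x]
  simp only [map_sum, map_smul, h]

lemma bil_ext {A B : Bil 5} (h : ∀ i j, A (e i) (e j) = B (e i) (e j)) : A = B :=
  clm_ext fun i => clm_ext (h i)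

lemma I_cube : Complex.I ^ 3 = -Complex.I := by
  rw [pow_succ, Complex.I_sq]; ring

/-! ### The degeneration family -/

noncomputable def Qrow (t : ℂ) : Fin 5 → Vn 5 :=
  ![t • e 0, (Complex.I * t^2) • (e 1 + e 2 + e 3 + e 4), t^2 • e 1, t^3 • e 2, t^4 • e 3]

noncomputable def Prow (t : ℂ) : Fin 5 → Vn 5 :=
  ![t⁻¹ • e 0, (t^2)⁻¹ • e 2, (t^3)⁻¹ • e 3, (t^4)⁻¹ • e 4,
    (-Complex.I * (t^2)⁻¹) • e 1 + (-(t^2)⁻¹) • e 2 + (-(t^3)⁻¹) • e 3 + (-(t^4)⁻¹) • e 4]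

lemma gcomp1 (t : ℂ) (ht : t ≠ 0) :
    ∀ x, phi (Qrow t) (phi (Prow t) x) = x := by
  have h : (phi (Qrow t)).comp (phi (Prow t)) = ContinuousLinearMap.id ℂ (Vn 5) := by
    apply clm_ext
    intro i
    fin_cases i <;>
      simp only [fin5_mk0, fin5_mk1, fin5_mk2, fin5_mk3, fin5_mk4, e_mk0, e_mk1, e_mk2, e_mk3, e_mk4, ContinuousLinearMap.comp_apply,
        ContinuousLinearMap.id_apply, Qrow, Prow, Matrix.cons_val_zero, Matrix.cons_val_one,
        Matrix.head_cons, Matrix.cons_val_two, Matrix.tail_cons, Matrix.cons_val_three,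
        Matrix.cons_val_four, map_smul, map_add, phi_e] <;>
      match_scalars <;>
      first
        | ring1
        | (field_simp <;> (try ring_nf) <;> (try simp only [Complex.I_sq, I_cube]) <;>
            (try field_simp) <;> (try ring1))
  intro x
  simpa using congrFun (congrArg (fun (f : Vn 5 →L[ℂ] Vn 5) => (f : Vn 5 → Vn 5)) h) x

lemma gcomp2 (t : ℂ) (ht : t ≠ 0) :
    ∀ x, phi (Prow t) (phi (Qrow t) x) = x := by
  have h : (phi (Prow t)).comp (phi (Qrow t)) = ContinuousLinearMap.id ℂ (Vn 5) := by
    apply clm_ext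
    intro i
    fin_cases i <;>
      simp only [fin5_mk0, fin5_mk1, fin5_mk2, fin5_mk3, fin5_mk4, e_mk0, e_mk1, e_mk2, e_mk3, e_mk4, ContinuousLinearMap.comp_apply,
        ContinuousLinearMap.id_apply, Qrow, Prow, Matrix.cons_val_zero, Matrix.cons_val_one,
        Matrix.head_cons, Matrix.cons_val_two, Matrix.tail_cons, Matrix.cons_val_three,
        Matrix.cons_val_four, map_smul, map_add, phi_e] <;>
      match_scalars <;>
      first
        | ring1
        | (field_simp <;> (try ring_nf) <;> (try simp only [Complex.I_sq, I_cube]) <;>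
            (try field_simp) <;> (try ring1))
  intro x
  simpa using congrFun (congrArg (fun (f : Vn 5 →L[ℂ] Vn 5) => (f : Vn 5 → Vn 5)) h) x

noncomputable def gE (t : ℂ) (ht : t ≠ 0) : Vn 5 ≃L[ℂ] Vn 5 :=
  ContinuousLinearEquiv.equivOfInverse (phi (Prow t)) (phi (Qrow t)) (gcomp1 t ht) (gcomp2 t ht)

lemma gE_apply (t : ℂ) (ht : t ≠ 0) (x : Vn 5) : gE t ht x = phi (Prow t) x := rfl
lemma gE_symm_apply (t : ℂ) (ht : t ≠ 0) (x : Vn 5) : (gE t ht).symm x = phi (Qrow t) x := rfl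

/-! ### The correction tables -/

noncomputable def T1 : Fin 5 → Fin 5 → Vn 5 :=
  ![![0, e 1 - Complex.I • e 2, 0, 0, -e 4],
    ![e 1 - Complex.I • e 2, (2:ℂ) • e 3, -(Complex.I • e 3), -(Complex.I • e 4), 0],
    ![0, -(Complex.I • e 3), 0, -e 4, 0],
    ![0, -(Complex.I • e 4), -e 4, 0, 0],
    ![-e 4, 0, 0, 0, 0]]

noncomputable def T2 : Fin 5 → Fin 5 → Vn 5 :=
  ![![0, 0, 0, 0, -e 3],
    ![0, (2*Complex.I) • e 1 + (2:ℂ) • e 2, e 1 - Complex.I • e 2, -(Complex.I • e 3), 0],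
    ![0, e 1 - Complex.I • e 2, 0, -e 3, 0],
    ![0, -(Complex.I • e 3), -e 3, 0, 0],
    ![-e 3, 0, 0, 0, 0]]

noncomputable def T3 : Fin 5 → Fin 5 → Vn 5 :=
  ![![0, 0, 0, 0, -(Complex.I • e 1) - e 2],
    ![0, 0, 0, e 1 - Complex.I • e 2, 0],
    ![0, 0, 0, -(Complex.I • e 1) - e 2, 0],
    ![0, e 1 - Complex.I • e 2, -(Complex.I • e 1) - e 2, 0, 0],
    ![-(Complex.I • e 1) - e 2, 0, 0, 0, 0]]

noncomputable def Fam (t : ℂ) : Bil 5 :=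
  psi tblA02 + t • psi T1 + t^2 • psi T2 + t^3 • psi T3

lemma Fam_e (t : ℂ) (a b : Fin 5) :
    Fam t (e a) (e b) = tblA02 a b + t • T1 a b + t^2 • T2 a b + t^3 • T3 a b := by
  simp only [Fam, ContinuousLinearMap.add_apply, ContinuousLinearMap.smul_apply, psi_e]

set_option synthInstance.maxHeartbeats 1000000 in
lemma Fam_cont : Continuous Fam := by
  letI h : ContinuousAdd (Bil 5) := (inferInstance : IsTopologicalAddGroup (Bil 5)).toContinuousAdd
  unfold Fam
  fun_prop

lemma Fam_mem (t : ℂ) (ht : t ≠ 0) (μ : Bil 5)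
    (hμ : ∀ i j : Fin 5, μ (e i) (e j) = tblA01 i j) : Fam t ∈ orbit μ := by
  refine ⟨gE t ht, ?_⟩
  apply bil_ext
  intro a b
  rw [act_apply, Fam_e]
  simp only [gE_apply, gE_symm_apply]
  fin_cases a <;> fin_cases b <;>
    simp only [fin5_mk0, fin5_mk1, fin5_mk2, fin5_mk3, fin5_mk4, e_mk0, e_mk1, e_mk2, e_mk3, e_mk4, Qrow, Prow, T1, T2, T3, tblA01, tblA02,
      Matrix.cons_val_zero, Matrix.cons_val_one, Matrix.head_cons, Matrix.cons_val_two,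
      Matrix.tail_cons, Matrix.cons_val_three, Matrix.cons_val_four, Matrix.head_fin_const,
      phi_e, map_smul, map_add, map_zero, ContinuousLinearMap.smul_apply,
      ContinuousLinearMap.add_apply, ContinuousLinearMap.zero_apply, hμ,
      smul_zero, zero_smul, add_zero, zero_add, smul_add, smul_smul] <;>
    match_scalars <;>
    first
      | ring1
      | (field_simp <;> (try ring_nf) <;> (try simp only [Complex.I_sq, I_cube]) <;>
          (try field_simp) <;> (try ring1))

/-- The $5$-dimensional nilpotent commutative associative algebra `𝐀01` degenerates to
`𝐀02`: the structure `λ` of `𝐀02` lies in the closure of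
the `GL(5, ℂ)`-orbit `O(μ)` of the structure `μ` of `𝐀01`. -/
theorem A01_deg_A02 (μ lam : Bil 5)
    (hμ : ∀ i j : Fin 5, μ (e i) (e j) = tblA01 i j)
    (hlam : ∀ i j : Fin 5, lam (e i) (e j) = tblA02 i j) :
    lam ∈ closure (orbit μ) := by
  have hF0 : Fam 0 = lam := by
    apply bil_ext
    intro a b
    rw [Fam_e, hlam]
    simp
  have htend : Filter.Tendsto Fam (nhdsWithin 0 {(0:ℂ)}ᶜ) (nhds lam) := by
    rw [← hF0]
    exact (Fam_cont.tendsto 0).mono_left nhdsWithin_le_nhds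
  refine mem_closure_of_tendsto htend ?_
  filter_upwards [self_mem_nhdsWithin] with t ht
  exact Fam_mem t ht μ hμ
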